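/- Let φ ∈ ℝ[z₁,z₂], let λ ∈ ℝ, r ≥ 1, N ≥ 1, and suppose (z₂ − λz₁^r)^N divides φ. If the operator T = T_{[−1,1]²} is of restricted weak type (p,q) for some 1 ≤ p, q ≤ ∞, then 1/q ≥ ((N+1)/(N+2))·(1/p) − 1/(N+2), and (by duality) also 1/q ≥ ((N+2)/(N+1))·(1/p) − 2/(N+1). -/

import Mathlib

open MeasureTheory MvPolynomial
open scoped ENNReal

/-- The averaging operator `T_R f(x) = ∫_R f(x₁ − t₁, x₂ − t₂, x₃ − φ(t)) dt`
acting on nonnegative measurable functions on ℝ³. -/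
noncomputable def avgOp (φ : ℝ × ℝ → ℝ) (R : Set (ℝ × ℝ))
    (f : ℝ × ℝ × ℝ → ℝ≥0∞) (x : ℝ × ℝ × ℝ) : ℝ≥0∞ :=
  ∫⁻ t in R, f (x.1 - t.1, x.2.1 - t.2, x.2.2 - φ t)

/-- The bilinear pairing `⟨T_R χ_E, χ_F⟩`. -/
noncomputable def pairing (φ : ℝ × ℝ → ℝ) (R : Set (ℝ × ℝ))
    (E F : Set (ℝ × ℝ × ℝ)) : ℝ≥0∞ :=
  ∫⁻ x, avgOp φ R (E.indicator 1) x * F.indicator 1 x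

/-- `T_R` is of restricted weak type `(p,q)`, written in terms of the reciprocals
`pinv = 1/p`, `qinv = 1/q` (so `1 ≤ p, q ≤ ∞` corresponds to `pinv, qinv ∈ [0,1]`):
there is `C < ∞` with `⟨T_R χ_E, χ_F⟩ ≤ C |E|^{1/p} |F|^{1−1/q}` for all measurable
`E, F ⊆ ℝ³` of finite measure. -/
def RWT (φ : ℝ × ℝ → ℝ) (R : Set (ℝ × ℝ)) (pinv qinv : ℝ) : Prop :=
  ∃ C : ℝ, 0 ≤ C ∧ ∀ E F : Set (ℝ × ℝ × ℝ), MeasurableSet E → MeasurableSet F →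
    volume E < ⊤ → volume F < ⊤ →
    pairing φ R E F ≤ ENNReal.ofReal C * volume E ^ pinv * volume F ^ (1 - qinv)

/-- The unit square `[−1,1]²` in ℝ². -/
def unitSquare : Set (ℝ × ℝ) := Set.Icc ((-1, -1) : ℝ × ℝ) (1, 1)

section AuxLemmas
open Set

lemma aux_pow_lip (n : ℕ) : ∀ a b : ℝ, |a| ≤ 1 → |b| ≤ 1 → |a ^ n - b ^ n| ≤ n * |a - b| := by
  induction n with
  | zero => intro a b _ _; simp
  | succ n ih =>
    intro a b ha hb
    have h1 : a ^ (n+1) - b ^ (n+1) = a * (a ^ n - b ^ n) + (a - b) * b ^ n := by ring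
    have h2 := ih a b ha hb
    have hbn : |b ^ n| ≤ 1 := by
      rw [abs_pow]; exact pow_le_one₀ (abs_nonneg b) hb
    have h3 : |a * (a ^ n - b ^ n)| ≤ 1 * (n * |a - b|) := by
      rw [abs_mul]
      exact mul_le_mul ha h2 (abs_nonneg _) one_pos.le
    have h4 : |(a - b) * b ^ n| ≤ |a - b| * 1 := by
      rw [abs_mul]
      exact mul_le_mul_of_nonneg_left hbn (abs_nonneg _)
    calc |a ^ (n+1) - b ^ (n+1)| ≤ |a * (a ^ n - b ^ n)| + |(a - b) * b ^ n| := by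
          rw [h1]; exact abs_add_le _ _
      _ ≤ 1 * (n * |a - b|) + |a - b| * 1 := add_le_add h3 h4
      _ = (n + 1 : ℕ) * |a - b| := by push_cast; ring

lemma aux_exp {a b K C2 δ0 : ℝ} (hK : 0 < K) (hC : 0 < C2) (hδ0 : 0 < δ0)
    (h : ∀ δ : ℝ, 0 < δ → δ ≤ δ0 → K * δ ^ a ≤ C2 * δ ^ b) : b ≤ a := by
  by_contra hab
  push_neg at hab
  set ε := b - a with hε
  have hεpos : 0 < ε := by simp only [hε]; linarith
  set L := Real.log C2 - Real.log K + 1 with hL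
  set δ := min δ0 (Real.exp (-(L / ε))) with hδ
  have hδpos : 0 < δ := lt_min hδ0 (Real.exp_pos _)
  have h1 := h δ hδpos (min_le_left _ _)
  have hlogδ : Real.log δ ≤ -(L / ε) := by
    calc Real.log δ ≤ Real.log (Real.exp (-(L / ε))) :=
        Real.log_le_log hδpos (min_le_right _ _)
      _ = -(L / ε) := Real.log_exp _
  have h2 : Real.log (K * δ ^ a) ≤ Real.log (C2 * δ ^ b) :=
    Real.log_le_log (by positivity) h1
  rw [Real.log_mul hK.ne' (by positivity), Real.log_mul hC.ne' (by positivity),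
    Real.log_rpow hδpos, Real.log_rpow hδpos] at h2
  have h4 : L / ε ≤ -Real.log δ := by linarith
  have h5 : L ≤ ε * (-Real.log δ) := by
    have h6 := mul_le_mul_of_nonneg_left h4 hεpos.le
    have h7 : ε * (L / ε) = L := by field_simp
    linarith
  have h9 : ε * (-Real.log δ) = -(b - a) * Real.log δ := by ring
  linarith

lemma aux_vol_tube2 (g : ℝ → ℝ) (hg : Measurable g) (a b d1 d2 : ℝ)
    (hab : a ≤ b) (hd : d1 ≤ d2) (S : Set (ℝ × ℝ))
    (hS : S = {t : ℝ × ℝ | t.1 ∈ Icc a b ∧ t.2 ∈ Icc (g t.1 + d1) (g t.1 + d2)}) :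
    MeasurableSet S ∧ volume S = ENNReal.ofReal ((b - a) * (d2 - d1)) := by
  have hmeas : MeasurableSet S := by
    rw [hS]
    have : {t : ℝ × ℝ | t.1 ∈ Icc a b ∧ t.2 ∈ Icc (g t.1 + d1) (g t.1 + d2)} =
        ((fun t : ℝ × ℝ => t.1) ⁻¹' Icc a b) ∩
        ({t : ℝ × ℝ | g t.1 + d1 ≤ t.2} ∩ {t : ℝ × ℝ | t.2 ≤ g t.1 + d2}) := by
      ext t; simp [Set.mem_Icc, and_assoc]
    rw [this]
    exact (measurable_fst measurableSet_Icc).inter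
      ((measurableSet_le ((hg.comp measurable_fst).add_const d1) measurable_snd).inter
       (measurableSet_le measurable_snd ((hg.comp measurable_fst).add_const d2)))
  refine ⟨hmeas, ?_⟩
  rw [hS] at hmeas ⊢
  rw [Measure.volume_eq_prod, Measure.prod_apply hmeas]
  have hslice : ∀ x : ℝ,
      volume (Prod.mk x ⁻¹' {t : ℝ × ℝ | t.1 ∈ Icc a b ∧ t.2 ∈ Icc (g t.1 + d1) (g t.1 + d2)})
      = (Icc a b).indicator (fun _ => ENNReal.ofReal (d2 - d1)) x := by
    intro x
    by_cases hx : x ∈ Icc a b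
    · have : Prod.mk x ⁻¹' {t : ℝ × ℝ | t.1 ∈ Icc a b ∧ t.2 ∈ Icc (g t.1 + d1) (g t.1 + d2)}
          = Icc (g x + d1) (g x + d2) := by
        ext y; simp only [Set.mem_preimage, Set.mem_setOf_eq]; exact and_iff_right hx
      rw [this, Real.volume_Icc, indicator_of_mem hx]
      congr 1; ring
    · have : Prod.mk x ⁻¹' {t : ℝ × ℝ | t.1 ∈ Icc a b ∧ t.2 ∈ Icc (g t.1 + d1) (g t.1 + d2)}
          = ∅ := by
        ext y
        simp only [Set.mem_preimage, Set.mem_setOf_eq, Set.mem_empty_iff_false, iff_false,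
          not_and]
        intro h1; exact absurd h1 hx
      rw [this, indicator_of_notMem hx]; simp
  simp_rw [hslice]
  rw [lintegral_indicator_const measurableSet_Icc, Real.volume_Icc,
    ← ENNReal.ofReal_mul (by linarith), mul_comm]

lemma aux_vol_tube3 (g : ℝ → ℝ) (hg : Measurable g) (a b d1 d2 e1 e2 : ℝ)
    (hab : a ≤ b) (hd : d1 ≤ d2) (he : e1 ≤ e2) (S : Set (ℝ × ℝ × ℝ))
    (hS : S = {x : ℝ × ℝ × ℝ | x.1 ∈ Icc a b ∧ x.2.1 ∈ Icc (g x.1 + d1) (g x.1 + d2) ∧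
      x.2.2 ∈ Icc e1 e2}) :
    MeasurableSet S ∧ volume S = ENNReal.ofReal ((b - a) * ((d2 - d1) * (e2 - e1))) := by
  have hmeas : MeasurableSet S := by
    rw [hS]
    have : {x : ℝ × ℝ × ℝ | x.1 ∈ Icc a b ∧ x.2.1 ∈ Icc (g x.1 + d1) (g x.1 + d2) ∧
        x.2.2 ∈ Icc e1 e2} =
        ((fun x : ℝ × ℝ × ℝ => x.1) ⁻¹' Icc a b) ∩
        (({x : ℝ × ℝ × ℝ | g x.1 + d1 ≤ x.2.1} ∩ {x : ℝ × ℝ × ℝ | x.2.1 ≤ g x.1 + d2}) ∩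
         ((fun x : ℝ × ℝ × ℝ => x.2.2) ⁻¹' Icc e1 e2)) := by
      ext x; simp [Set.mem_Icc, and_assoc]
    rw [this]
    exact (measurable_fst measurableSet_Icc).inter
      (((measurableSet_le ((hg.comp measurable_fst).add_const d1) (measurable_fst.comp measurable_snd)).inter
       (measurableSet_le (measurable_fst.comp measurable_snd) ((hg.comp measurable_fst).add_const d2))).inter
       ((measurable_snd.comp measurable_snd) measurableSet_Icc))
  refine ⟨hmeas, ?_⟩
  rw [hS] at hmeas ⊢
  rw [Measure.volume_eq_prod, Measure.prod_apply hmeas]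
  have hslice : ∀ x : ℝ,
      volume (Prod.mk x ⁻¹' {x : ℝ × ℝ × ℝ | x.1 ∈ Icc a b ∧ x.2.1 ∈ Icc (g x.1 + d1) (g x.1 + d2) ∧
        x.2.2 ∈ Icc e1 e2})
      = (Icc a b).indicator (fun _ => ENNReal.ofReal ((d2 - d1) * (e2 - e1))) x := by
    intro x
    by_cases hx : x ∈ Icc a b
    · have : Prod.mk x ⁻¹' {x : ℝ × ℝ × ℝ | x.1 ∈ Icc a b ∧ x.2.1 ∈ Icc (g x.1 + d1) (g x.1 + d2) ∧
          x.2.2 ∈ Icc e1 e2} = Icc (g x + d1) (g x + d2) ×ˢ Icc e1 e2 := by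
        ext y; simp only [Set.mem_preimage, Set.mem_setOf_eq, Set.mem_prod]
        exact and_iff_right hx
      rw [this, Measure.volume_eq_prod, Measure.prod_prod, Real.volume_Icc, Real.volume_Icc,
        indicator_of_mem hx, ← ENNReal.ofReal_mul (by linarith)]
      congr 1; ring
    · have : Prod.mk x ⁻¹' {x : ℝ × ℝ × ℝ | x.1 ∈ Icc a b ∧ x.2.1 ∈ Icc (g x.1 + d1) (g x.1 + d2) ∧
          x.2.2 ∈ Icc e1 e2} = ∅ := by
        ext y
        simp only [Set.mem_preimage, Set.mem_setOf_eq, Set.mem_empty_iff_false, iff_false,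
          not_and]
        intro h1; exact absurd h1 hx
      rw [this, indicator_of_notMem hx]; simp
  simp_rw [hslice]
  rw [lintegral_indicator_const measurableSet_Icc, Real.volume_Icc,
    ← ENNReal.ofReal_mul (mul_nonneg (by linarith) (by linarith)), mul_comm]

lemma aux_pairing_lower (φ : ℝ × ℝ → ℝ) (R : Set (ℝ × ℝ)) (E F : Set (ℝ × ℝ × ℝ)) (m : ℝ≥0∞)
    (hF : MeasurableSet F)
    (h : ∀ x ∈ F, ∃ S : Set (ℝ × ℝ), MeasurableSet S ∧ S ⊆ R ∧ m ≤ volume S ∧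
      ∀ t ∈ S, (x.1 - t.1, x.2.1 - t.2, x.2.2 - φ t) ∈ E) :
    m * volume F ≤ pairing φ R E F := by
  rw [pairing]
  calc m * volume F = ∫⁻ x, F.indicator (fun _ => m) x := (lintegral_indicator_const hF m).symm
    _ ≤ ∫⁻ x, avgOp φ R (E.indicator 1) x * F.indicator 1 x := by
      apply lintegral_mono
      intro x
      dsimp only
      by_cases hx : x ∈ F
      · rw [indicator_of_mem hx, indicator_of_mem hx, Pi.one_apply, mul_one]
        obtain ⟨S, hSmeas, hSR, hmS, hmem⟩ := h x hx
        calc m ≤ volume S := hmS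
          _ = ∫⁻ t in R, S.indicator 1 t := by
            rw [lintegral_indicator hSmeas]
            simp only [Pi.one_apply]
            rw [setLIntegral_one, Measure.restrict_apply hSmeas,
              inter_eq_self_of_subset_left hSR]
          _ ≤ avgOp φ R (E.indicator 1) x := by
            rw [avgOp]
            apply lintegral_mono
            intro t
            dsimp only
            by_cases ht : t ∈ S
            · rw [indicator_of_mem ht, indicator_of_mem (hmem t ht)]; simp
            · rw [indicator_of_notMem ht]; exact zero_le
      · rw [indicator_of_notMem hx, indicator_of_notMem hx, mul_zero]

lemma aux_combine {C0 m vE vF pinv qinv : ℝ} (hC0 : 0 ≤ C0) (hm : 0 ≤ m)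
    (hvE : 0 < vE) (hvF : 0 < vF)
    (h : ENNReal.ofReal m * ENNReal.ofReal vF ≤
      ENNReal.ofReal C0 * ENNReal.ofReal vE ^ pinv * ENNReal.ofReal vF ^ (1 - qinv)) :
    m * vF ≤ C0 * vE ^ pinv * vF ^ (1 - qinv) := by
  rw [← ENNReal.ofReal_mul hm, ENNReal.ofReal_rpow_of_pos hvE, ENNReal.ofReal_rpow_of_pos hvF,
    ← ENNReal.ofReal_mul hC0, ← ENNReal.ofReal_mul (by positivity)] at h
  exact (ENNReal.ofReal_le_ofReal_iff (by positivity)).mp h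

lemma aux_algebra {δ L CE CF C0 vE vF m pinv qinv : ℝ} (n1 n2 n3 : ℕ)
    (hδ : 0 < δ) (hp0 : 0 ≤ pinv) (hq1 : qinv ≤ 1) (hC0 : 0 ≤ C0)
    (hCE : 0 ≤ CE) (hCF : 0 ≤ CF) (hvE0 : 0 ≤ vE) (hvF0 : 0 ≤ vF)
    (hm : m * vF = L * δ ^ n3)
    (hvE : vE ≤ CE * δ ^ n1) (hvF : vF = CF * δ ^ n2)
    (hreal : m * vF ≤ C0 * vE ^ pinv * vF ^ (1 - qinv)) :
    L * δ ^ ((n3 : ℕ) : ℝ) ≤ ((C0 + 1) * CE ^ pinv * CF ^ (1 - qinv)) *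
      δ ^ (((n1 : ℕ) : ℝ) * pinv + ((n2 : ℕ) : ℝ) * (1 - qinv)) := by
  have e1 : (0:ℝ) ≤ 1 - qinv := by linarith
  have hδn : ∀ k : ℕ, (δ:ℝ) ^ k = δ ^ ((k : ℕ) : ℝ) := fun k => (Real.rpow_natCast δ k).symm
  have h2 : vE ^ pinv ≤ (CE * δ ^ n1) ^ pinv := Real.rpow_le_rpow hvE0 hvE hp0
  have h4 : (CE * δ ^ n1) ^ pinv = CE ^ pinv * δ ^ (((n1 : ℕ) : ℝ) * pinv) := by
    rw [Real.mul_rpow hCE (by positivity), hδn n1, ← Real.rpow_mul hδ.le]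
  have h5 : (CF * δ ^ n2) ^ (1 - qinv) = CF ^ (1 - qinv) * δ ^ (((n2 : ℕ) : ℝ) * (1 - qinv)) := by
    rw [Real.mul_rpow hCF (by positivity), hδn n2, ← Real.rpow_mul hδ.le]
  calc L * δ ^ ((n3 : ℕ) : ℝ) = m * vF := by rw [← hδn n3, ← hm]
    _ ≤ C0 * vE ^ pinv * vF ^ (1 - qinv) := hreal
    _ ≤ (C0 + 1) * ((CE * δ ^ n1) ^ pinv) * ((CF * δ ^ n2) ^ (1 - qinv)) := by
        rw [hvF]
        apply mul_le_mul ?_ le_rfl (Real.rpow_nonneg (by positivity) _) (by positivity)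
        apply mul_le_mul (by linarith) h2 (Real.rpow_nonneg hvE0 _) (by linarith)
    _ = ((C0 + 1) * CE ^ pinv * CF ^ (1 - qinv)) *
        δ ^ (((n1 : ℕ) : ℝ) * pinv + ((n2 : ℕ) : ℝ) * (1 - qinv)) := by
        rw [h4, h5, Real.rpow_add hδ]; ring

end AuxLemmas

set_option maxHeartbeats 2000000 in
/-- If `(z₂ − λz₁^r)^N` divides φ (λ ∈ ℝ, r ≥ 1, N ≥ 1) and `T = T_{[−1,1]²}` is of
restricted weak type `(p,q)`, then `1/q ≥ ((N+1)/(N+2))(1/p) − 1/(N+2)` and (by duality)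
`1/q ≥ ((N+2)/(N+1))(1/p) − 2/(N+1)`. -/
theorem stmt_13 (φp : MvPolynomial (Fin 2) ℝ) (lam : ℝ) (r N : ℕ) (hr : 1 ≤ r) (hN : 1 ≤ N)
    (hdvd : (X 1 - C lam * X 0 ^ r : MvPolynomial (Fin 2) ℝ) ^ N ∣ φp)
    (pinv qinv : ℝ) (hp0 : 0 ≤ pinv) (hp1 : pinv ≤ 1) (hq0 : 0 ≤ qinv) (hq1 : qinv ≤ 1)
    (hrwt : RWT (fun t => eval ![t.1, t.2] φp) unitSquare pinv qinv) :
    ((N : ℝ) + 1) / ((N : ℝ) + 2) * pinv - 1 / ((N : ℝ) + 2) ≤ qinv ∧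
    ((N : ℝ) + 2) / ((N : ℝ) + 1) * pinv - 2 / ((N : ℝ) + 1) ≤ qinv := by
  classical
  obtain ⟨C0, hC00, hC0⟩ := hrwt
  obtain ⟨ψ, hψ⟩ := hdvd
  -- evaluation formula
  have hφ : ∀ t : ℝ × ℝ, eval ![t.1, t.2] φp = (t.2 - lam * t.1 ^ r) ^ N * eval ![t.1, t.2] ψ := by
    intro t
    simp [hψ, Matrix.cons_val_one, Matrix.head_cons]
  -- bound on the cofactor
  have hv : Continuous fun t : ℝ × ℝ => (![t.1, t.2] : Fin 2 → ℝ) := by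
    apply continuous_pi
    intro i
    fin_cases i
    · simpa using continuous_fst
    · simpa using continuous_snd
  have hcont : ContinuousOn (fun t : ℝ × ℝ => eval ![t.1, t.2] ψ) unitSquare :=
    ((MvPolynomial.continuous_eval ψ).comp hv).continuousOn
  obtain ⟨K0, hK0⟩ := (isCompact_Icc : IsCompact unitSquare).exists_bound_of_continuousOn hcont
  set K := max K0 1 with hK
  have hK1 : (1:ℝ) ≤ K := le_max_right _ _
  have hKpos : (0:ℝ) < K := by linarith
  have hKb : ∀ t ∈ unitSquare, |eval ![t.1, t.2] ψ| ≤ K := by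
    intro t ht
    calc |eval ![t.1, t.2] ψ| ≤ K0 := by simpa [Real.norm_eq_abs] using hK0 t ht
      _ ≤ K := le_max_left _ _
  -- basic constants
  set c := min (1/2 : ℝ) (1 / (2 * (|lam| + 1))) with hc
  have hcpos : (0:ℝ) < c := lt_min (by norm_num) (by positivity)
  have hc12 : c ≤ 1/2 := min_le_left _ _
  have hlc : |lam| * c ≤ 1/2 := by
    have h1 : c ≤ 1 / (2 * (|lam| + 1)) := min_le_right _ _
    have h2 : |lam| * c ≤ |lam| * (1 / (2 * (|lam| + 1))) :=
      mul_le_mul_of_nonneg_left h1 (abs_nonneg lam)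
    have h3 : |lam| * (1 / (2 * (|lam| + 1))) ≤ 1/2 := by
      rw [mul_one_div, div_le_iff₀ (by positivity)]
      nlinarith [abs_nonneg lam]
    linarith
  have hgb : ∀ s : ℝ, |s| ≤ c → |lam * s ^ r| ≤ 1/2 := by
    intro s hs
    have hsc1 : |s| ≤ 1 := hs.trans (by linarith)
    have h1 : |s| ^ r ≤ |s| := pow_le_of_le_one (abs_nonneg s) hsc1 (by omega)
    calc |lam * s ^ r| = |lam| * |s| ^ r := by rw [abs_mul, abs_pow]
      _ ≤ |lam| * c := mul_le_mul_of_nonneg_left (h1.trans hs) (abs_nonneg lam)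
      _ ≤ 1/2 := hlc
  have hglip : ∀ s u : ℝ, |s| ≤ 1 → |u| ≤ 1 →
      |lam * s ^ r - lam * u ^ r| ≤ (|lam| * r) * |s - u| := by
    intro s u hs hu
    calc |lam * s ^ r - lam * u ^ r| = |lam| * |s ^ r - u ^ r| := by
          rw [← abs_mul]; congr 1; ring
      _ ≤ |lam| * (r * |s - u|) :=
          mul_le_mul_of_nonneg_left (aux_pow_lip r s u hs hu) (abs_nonneg lam)
      _ = (|lam| * r) * |s - u| := by ring
  have hUS : ∀ t : ℝ × ℝ, |t.1| ≤ 1 → |t.2| ≤ 1 → t ∈ unitSquare := by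
    intro t h1 h2
    rw [abs_le] at h1 h2
    rw [unitSquare, Set.mem_Icc]
    constructor
    · rw [Prod.le_def]; exact ⟨h1.1, h2.1⟩
    · rw [Prod.le_def]; exact ⟨h1.2, h2.2⟩
  have hφb : ∀ t : ℝ × ℝ, t ∈ unitSquare → ∀ d : ℝ, |t.2 - lam * t.1 ^ r| ≤ d →
      |eval ![t.1, t.2] φp| ≤ K * d ^ N := by
    intro t ht d hd
    have hd0 : 0 ≤ d := (abs_nonneg _).trans hd
    rw [hφ t, abs_mul, abs_pow]
    calc |t.2 - lam * t.1 ^ r| ^ N * |eval ![t.1, t.2] ψ| ≤ d ^ N * K :=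
        mul_le_mul (pow_le_pow_left₀ (abs_nonneg _) hd N) (hKb t ht) (abs_nonneg _)
          (by positivity)
      _ = K * d ^ N := by ring
  set A := 2 + |lam| * (r : ℝ) with hA
  have hA2 : (2:ℝ) ≤ A := by
    have := mul_nonneg (abs_nonneg lam) (Nat.cast_nonneg (α := ℝ) r)
    linarith
  have hA0 : (0:ℝ) ≤ A := by linarith
  -- measurability of the shear functions
  have hmg : Measurable fun s : ℝ => lam * s ^ r := (measurable_id.pow_const r).const_mul lam
  have hmg' : Measurable fun s : ℝ => -(lam * (-s) ^ r) :=
    ((measurable_id.neg.pow_const r).const_mul lam).neg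
  -- ===================== Configuration 1 =====================
  have key1 : ∀ δ : ℝ, 0 < δ → δ ≤ min c (1/4) →
      (8*(c*K)) * δ ^ (((N+3 : ℕ)) : ℝ) ≤
      ((C0 + 1) * (8*(A*K)) ^ pinv * (4*K) ^ (1 - qinv)) *
        δ ^ (((N+1 : ℕ) : ℝ) * pinv + ((N+2 : ℕ) : ℝ) * (1 - qinv)) := by
    intro δ hδ hδm
    have hδc : δ ≤ c := hδm.trans (min_le_left _ _)
    have hδ4 : δ ≤ 1/4 := hδm.trans (min_le_right _ _)
    have hδN : (0:ℝ) < δ ^ N := pow_pos hδ N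
    have hAδ : (0:ℝ) < A * δ := mul_pos (by linarith) hδ
    have hKδ : (0:ℝ) < K * δ ^ N := mul_pos hKpos hδN
    set S₁ := {t : ℝ × ℝ | t.1 ∈ Set.Icc 0 c ∧
      t.2 ∈ Set.Icc (lam * t.1 ^ r + -δ) (lam * t.1 ^ r + δ)} with hS₁
    set E₁ := {x : ℝ × ℝ × ℝ | x.1 ∈ Set.Icc (-c) δ ∧
      x.2.1 ∈ Set.Icc (-(lam * (-x.1) ^ r) + -(A*δ)) (-(lam * (-x.1) ^ r) + A*δ) ∧
      x.2.2 ∈ Set.Icc (-(2*(K*δ^N))) (2*(K*δ^N))} with hE₁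
    set F₁ := {x : ℝ × ℝ × ℝ | x.1 ∈ Set.Icc 0 δ ∧
      x.2.1 ∈ Set.Icc (0 + -δ) (0 + δ) ∧
      x.2.2 ∈ Set.Icc (-(K*δ^N)) (K*δ^N)} with hF₁
    obtain ⟨hS₁m, hS₁v⟩ := aux_vol_tube2 (fun s => lam * s ^ r) hmg 0 c (-δ) δ
      hcpos.le (by linarith) S₁ rfl
    obtain ⟨hE₁m, hE₁v⟩ := aux_vol_tube3 (fun s => -(lam * (-s) ^ r)) hmg' (-c) δ
      (-(A*δ)) (A*δ) (-(2*(K*δ^N))) (2*(K*δ^N)) (by linarith)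
      (by linarith) (by linarith) E₁ rfl
    obtain ⟨hF₁m, hF₁v⟩ := aux_vol_tube3 (fun _ => (0:ℝ)) measurable_const 0 δ
      (-δ) δ (-(K*δ^N)) (K*δ^N) hδ.le (by linarith) (by linarith) F₁ rfl
    -- lower bound for the pairing
    have hlow : ENNReal.ofReal ((c - 0) * (δ - -δ)) * volume F₁ ≤
        pairing (fun t => eval ![t.1, t.2] φp) unitSquare E₁ F₁ := by
      apply aux_pairing_lower _ _ _ _ _ hF₁m
      intro x hx
      refine ⟨S₁, hS₁m, ?_, le_of_eq hS₁v.symm, ?_⟩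
      · -- S₁ ⊆ unitSquare
        intro t ht
        simp only [hS₁, Set.mem_setOf_eq, Set.mem_Icc] at ht
        have ht1 : |t.1| ≤ c := by rw [abs_le]; constructor <;> linarith
        have hg1 : |lam * t.1 ^ r| ≤ 1/2 := hgb t.1 ht1
        rw [abs_le] at hg1
        apply hUS
        · rw [abs_le]; constructor <;> linarith
        · rw [abs_le]; constructor <;> linarith
      · intro t ht
        simp only [hF₁, Set.mem_setOf_eq, Set.mem_Icc] at hx
        simp only [hS₁, Set.mem_setOf_eq, Set.mem_Icc] at ht
        have ht1 : |t.1| ≤ c := by rw [abs_le]; constructor <;> linarith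
        have htUS : t ∈ unitSquare := by
          have hg1 : |lam * t.1 ^ r| ≤ 1/2 := hgb t.1 ht1
          rw [abs_le] at hg1
          apply hUS
          · rw [abs_le]; constructor <;> linarith
          · rw [abs_le]; constructor <;> linarith
        have hφt : |eval ![t.1, t.2] φp| ≤ K * δ ^ N := by
          apply hφb t htUS δ
          rw [abs_le]; constructor <;> linarith [ht.2.1, ht.2.2]
        rw [abs_le] at hφt
        simp only [hE₁, Set.mem_setOf_eq, Set.mem_Icc]
        have hw : -(x.1 - t.1) = t.1 - x.1 := by ring
        rw [hw]
        have hmid : |lam * (t.1 - x.1) ^ r - lam * t.1 ^ r| ≤ (|lam| * r) * δ := by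
          have h1 : |t.1 - x.1| ≤ 1 := by rw [abs_le]; constructor <;> linarith
          have h2 : |t.1| ≤ 1 := ht1.trans (by linarith)
          have h3 := hglip (t.1 - x.1) t.1 h1 h2
          have h4 : |t.1 - x.1 - t.1| ≤ δ := by
            rw [abs_le]; constructor <;> linarith [hx.1.1, hx.1.2]
          calc |lam * (t.1 - x.1) ^ r - lam * t.1 ^ r| ≤ (|lam| * r) * |t.1 - x.1 - t.1| := h3
            _ ≤ (|lam| * r) * δ := mul_le_mul_of_nonneg_left h4
                (mul_nonneg (abs_nonneg _) (Nat.cast_nonneg _))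
        rw [abs_le] at hmid
        refine ⟨⟨by linarith [hx.1.1, hx.1.2], by linarith [hx.1.1, hx.1.2]⟩, ⟨?_, ?_⟩, ?_, ?_⟩
        · simp only [hA]; linarith [hx.2.1.1, hx.2.1.2, ht.2.1, ht.2.2]
        · simp only [hA]; linarith [hx.2.1.1, hx.2.1.2, ht.2.1, ht.2.2]
        · linarith [hx.2.2.1, hx.2.2.2]
        · linarith [hx.2.2.1, hx.2.2.2]
    -- upper bound from RWT
    have hup := hC0 E₁ F₁ hE₁m hF₁m
      (by rw [hE₁v]; exact ENNReal.ofReal_lt_top)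
      (by rw [hF₁v]; exact ENNReal.ofReal_lt_top)
    have hcomb := hlow.trans hup
    rw [hE₁v, hF₁v] at hcomb
    have hm0 : (0:ℝ) < (c - 0) * (δ - -δ) := mul_pos (by linarith) (by linarith)
    have hvE0 : (0:ℝ) < (δ - -c) * ((A*δ - -(A*δ)) * (2*(K*δ^N) - -(2*(K*δ^N)))) :=
      mul_pos (by linarith) (mul_pos (by linarith) (by linarith))
    have hvF0 : (0:ℝ) < (δ - 0) * ((δ - -δ) * (K*δ^N - -(K*δ^N))) :=
      mul_pos (by linarith) (mul_pos (by linarith) (by linarith))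
    have hreal := aux_combine hC00 hm0.le hvE0 hvF0 hcomb
    have hCE0 : (0:ℝ) ≤ 8*(A*K) := mul_nonneg (by norm_num) (mul_nonneg hA0 hKpos.le)
    have hvEbound : (δ - -c) * ((A*δ - -(A*δ)) * (2*(K*δ^N) - -(2*(K*δ^N)))) ≤
        8*(A*K) * δ ^ (N+1) := by
      have hQ : (0:ℝ) ≤ 8*(A*K) * δ ^ (N+1) := mul_nonneg hCE0 (pow_nonneg hδ.le _)
      have e : (δ - -c) * ((A*δ - -(A*δ)) * (2*(K*δ^N) - -(2*(K*δ^N)))) =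
          (δ + c) * (8*(A*K) * δ ^ (N+1)) := by ring
      rw [e]
      have h1 := mul_le_mul_of_nonneg_right (show δ + c ≤ 1 by linarith) hQ
      linarith
    exact aux_algebra (N+1) (N+2) (N+3) hδ hp0 hq1 hC00
      hCE0 (by linarith) hvE0.le hvF0.le
      (by ring) hvEbound (by ring) hreal
  -- exponent inequality from configuration 1
  have hexp1 := aux_exp (K := 8*(c*K))
    (mul_pos (by norm_num) (mul_pos hcpos hKpos))
    (mul_pos (mul_pos (by linarith : (0:ℝ) < C0 + 1)
      (Real.rpow_pos_of_pos (mul_pos (by norm_num) (mul_pos (by linarith) hKpos)) _))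
      (Real.rpow_pos_of_pos (by linarith : (0:ℝ) < 4*K) _))
    (lt_min hcpos (by norm_num)) key1
  -- ===================== Configuration 2 =====================
  set B := K * (1 + A ^ N) with hB
  have hApow : (0:ℝ) < A ^ N := pow_pos (by linarith) N
  have hBpos : (0:ℝ) < B := by nlinarith
  have key2 : ∀ δ : ℝ, 0 < δ → δ ≤ min c (1/4) →
      (16*(c*K)) * δ ^ (((N+3 : ℕ)) : ℝ) ≤
      ((C0 + 1) * (8*B) ^ pinv * (4*(c*K)) ^ (1 - qinv)) *
        δ ^ (((N+2 : ℕ) : ℝ) * pinv + ((N+1 : ℕ) : ℝ) * (1 - qinv)) := by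
    intro δ hδ hδm
    have hδc : δ ≤ c := hδm.trans (min_le_left _ _)
    have hδ4 : δ ≤ 1/4 := hδm.trans (min_le_right _ _)
    have hδN : (0:ℝ) < δ ^ N := pow_pos hδ N
    have hKδ : (0:ℝ) < K * δ ^ N := mul_pos hKpos hδN
    have hBδ : (0:ℝ) < B * δ ^ N := mul_pos hBpos hδN
    set E₂ := {x : ℝ × ℝ × ℝ | x.1 ∈ Set.Icc (-δ) δ ∧
      x.2.1 ∈ Set.Icc (0 + -δ) (0 + δ) ∧
      x.2.2 ∈ Set.Icc (-(B*δ^N)) (B*δ^N)} with hE₂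
    set F₂ := {x : ℝ × ℝ × ℝ | x.1 ∈ Set.Icc 0 c ∧
      x.2.1 ∈ Set.Icc (lam * x.1 ^ r + -δ) (lam * x.1 ^ r + δ) ∧
      x.2.2 ∈ Set.Icc (-(K*δ^N)) (K*δ^N)} with hF₂
    obtain ⟨hE₂m, hE₂v⟩ := aux_vol_tube3 (fun _ => (0:ℝ)) measurable_const (-δ) δ
      (-δ) δ (-(B*δ^N)) (B*δ^N) (by linarith) (by linarith) (by linarith) E₂ rfl
    obtain ⟨hF₂m, hF₂v⟩ := aux_vol_tube3 (fun s => lam * s ^ r) hmg 0 c (-δ) δ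
      (-(K*δ^N)) (K*δ^N) hcpos.le (by linarith) (by linarith) F₂ rfl
    have hlow : ENNReal.ofReal ((2*δ) * (2*δ)) * volume F₂ ≤
        pairing (fun t => eval ![t.1, t.2] φp) unitSquare E₂ F₂ := by
      apply aux_pairing_lower _ _ _ _ _ hF₂m
      intro x hx
      simp only [hF₂, Set.mem_setOf_eq, Set.mem_Icc] at hx
      have hx1 : |x.1| ≤ c := by rw [abs_le]; constructor <;> linarith [hx.1.1, hx.1.2]
      have hgx : |lam * x.1 ^ r| ≤ 1/2 := hgb x.1 hx1
      rw [abs_le] at hgx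
      obtain ⟨hSxm, hSxv⟩ := aux_vol_tube2 (fun _ => x.2.1) measurable_const
        (x.1 - δ) (x.1 + δ) (-δ) δ (by linarith) (by linarith)
        {t : ℝ × ℝ | t.1 ∈ Set.Icc (x.1 - δ) (x.1 + δ) ∧
          t.2 ∈ Set.Icc (x.2.1 + -δ) (x.2.1 + δ)} rfl
      refine ⟨_, hSxm, ?_, ?_, ?_⟩
      · intro t ht
        simp only [Set.mem_setOf_eq, Set.mem_Icc] at ht
        apply hUS
        · rw [abs_le]
          constructor <;> linarith [ht.1.1, ht.1.2, hx.1.1, hx.1.2]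
        · rw [abs_le]
          constructor <;> linarith [ht.2.1, ht.2.2, hx.2.1.1, hx.2.1.2]
      · rw [hSxv]
        exact ENNReal.ofReal_le_ofReal (le_of_eq (by ring))
      · intro t ht
        simp only [Set.mem_setOf_eq, Set.mem_Icc] at ht
        have htUS : t ∈ unitSquare := by
          apply hUS
          · rw [abs_le]
            constructor <;> linarith [ht.1.1, ht.1.2, hx.1.1, hx.1.2]
          · rw [abs_le]
            constructor <;> linarith [ht.2.1, ht.2.2, hx.2.1.1, hx.2.1.2]
        have ht1abs : |t.1| ≤ 1 := by
          rw [abs_le]; constructor <;> linarith [ht.1.1, ht.1.2, hx.1.1, hx.1.2]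
        have hlipv := hglip x.1 t.1
          (by rw [abs_le]; constructor <;> linarith [hx.1.1, hx.1.2]) ht1abs
        have h4 : |x.1 - t.1| ≤ δ := by
          rw [abs_le]; constructor <;> linarith [ht.1.1, ht.1.2]
        have hmid : |lam * x.1 ^ r - lam * t.1 ^ r| ≤ (|lam| * r) * δ :=
          hlipv.trans (mul_le_mul_of_nonneg_left h4
            (mul_nonneg (abs_nonneg _) (Nat.cast_nonneg _)))
        rw [abs_le] at hmid
        have hcurve : |t.2 - lam * t.1 ^ r| ≤ A * δ := by
          rw [abs_le]
          simp only [hA]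
          constructor <;> linarith [ht.2.1, ht.2.2, hx.2.1.1, hx.2.1.2]
        have hφt := hφb t htUS (A*δ) hcurve
        have hABe : K * (A*δ)^N = K * A^N * δ^N := by rw [mul_pow]; ring
        rw [hABe, abs_le] at hφt
        have hBe : B * δ^N = K*δ^N + K*A^N*δ^N := by rw [hB]; ring
        simp only [hE₂, Set.mem_setOf_eq, Set.mem_Icc]
        refine ⟨⟨by linarith [ht.1.1, ht.1.2], by linarith [ht.1.1, ht.1.2]⟩,
          ⟨by linarith [ht.2.1, ht.2.2], by linarith [ht.2.1, ht.2.2]⟩,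
          by linarith [hx.2.2.1, hx.2.2.2, hφt.1, hφt.2],
          by linarith [hx.2.2.1, hx.2.2.2, hφt.1, hφt.2]⟩
    have hup := hC0 E₂ F₂ hE₂m hF₂m
      (by rw [hE₂v]; exact ENNReal.ofReal_lt_top)
      (by rw [hF₂v]; exact ENNReal.ofReal_lt_top)
    have hcomb := hlow.trans hup
    rw [hE₂v, hF₂v] at hcomb
    have hm0 : (0:ℝ) < (2*δ)*(2*δ) := by positivity
    have hvE0 : (0:ℝ) < (δ - -δ) * ((δ - -δ) * (B*δ^N - -(B*δ^N))) :=
      mul_pos (by linarith) (mul_pos (by linarith) (by linarith))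
    have hvF0 : (0:ℝ) < (c - 0) * ((δ - -δ) * (K*δ^N - -(K*δ^N))) :=
      mul_pos (by linarith) (mul_pos (by linarith) (by linarith))
    have hreal := aux_combine hC00 hm0.le hvE0 hvF0 hcomb
    exact aux_algebra (N+2) (N+1) (N+3) hδ hp0 hq1 hC00
      (by linarith) (mul_nonneg (by norm_num) (mul_nonneg hcpos.le hKpos.le))
      hvE0.le hvF0.le (by ring) (le_of_eq (by ring)) (by ring) hreal
  have hexp2 := aux_exp (K := 16*(c*K))
    (mul_pos (by norm_num) (mul_pos hcpos hKpos))
    (mul_pos (mul_pos (by linarith : (0:ℝ) < C0 + 1)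
      (Real.rpow_pos_of_pos (by linarith : (0:ℝ) < 8*B) _))
      (Real.rpow_pos_of_pos (mul_pos (by norm_num) (mul_pos hcpos hKpos)) _))
    (lt_min hcpos (by norm_num)) key2
  push_cast at hexp1 hexp2
  constructor
  · have hN2 : (0:ℝ) < (N:ℝ) + 2 := by positivity
    rw [show ((N:ℝ)+1)/((N:ℝ)+2)*pinv - 1/((N:ℝ)+2) = (((N:ℝ)+1)*pinv - 1)/((N:ℝ)+2) from
      by ring, div_le_iff₀ hN2]
    linarith
  · have hN1 : (0:ℝ) < (N:ℝ) + 1 := by positivity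
    rw [show ((N:ℝ)+2)/((N:ℝ)+1)*pinv - 2/((N:ℝ)+1) = (((N:ℝ)+2)*pinv - 2)/((N:ℝ)+1) from
      by ring, div_le_iff₀ hN1]
    linarith
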